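/- Let G be a finite non-solvable group. Given that 6 ≤ deg(x) ≤ |G| − |Sol(G)| − 2 for every vertex x of the non-solvable graph of G, the solvability degree satisfies 2(|G|−|Sol(G)|)/|G|² + 2|Sol(G)|/|G| − |Sol(G)|²/|G|² ≤ P_s(G) ≤ 1 − 6(|G|−|Sol(G)|)/|G|². -/

import Mathlib

open Subgroup

def solvabilizer {G : Type*} [Group G] (x : G) : Set G :=
  {g | IsSolvable (closure ({g, x} : Set G))}

def solSet (G : Type*) [Group G] : Set G :=
  {x | ∀ y : G, IsSolvable (closure ({x, y} : Set G))}

/-- `R` is the solvable radical of `G`: the largest solvable normal subgroup. -/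
def IsSolvableRadical {G : Type*} [Group G] (R : Subgroup G) : Prop :=
  IsSolvable R ∧ R.Normal ∧ ∀ N : Subgroup G, N.Normal → IsSolvable N → N ≤ R

/-- The non-solvable graph: vertices are elements outside the solvable radical `R`,
two distinct vertices adjacent iff they generate a non-solvable subgroup. -/
def nonSolvableGraph (G : Type*) [Group G] (R : Subgroup G) :
    SimpleGraph {x : G // x ∉ R} where
  Adj a b := a ≠ b ∧ ¬ IsSolvable (closure ({(a : G), (b : G)} : Set G))
  symm := by
    constructor
    rintro a b ⟨h1, h2⟩
    exact ⟨h1.symm, by rwa [Set.pair_comm]⟩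
  loopless := by constructor; rintro a ⟨h1, _⟩; exact h1 rfl

/-- Neighborhood of `x` in the non-solvable graph, as a subset of `G`. -/
def nsNbhd {G : Type*} [Group G] (R : Subgroup G) (x : G) : Set G :=
  {y | y ∉ R ∧ y ≠ x ∧ ¬ IsSolvable (closure ({x, y} : Set G))}

/-- Neighborhood of `x` in the non-solvable graph where the solvable elements are
described by `solSet`. -/
def nsNbhdSet {G : Type*} [Group G] (x : G) : Set G :=
  {y | y ∉ solSet G ∧ y ≠ x ∧ ¬ IsSolvable (closure ({x, y} : Set G))}



lemma solvable_of_le' {Q : Type*} [Group Q] {K L : Subgroup Q} (h : K ≤ L) [Group.IsSolvable L] :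
    IsSolvable K :=
  solvable_of_solvable_injective (Subgroup.inclusion_injective h)

lemma solvable_singleton {Q : Type*} [Group Q] (u : Q) :
    IsSolvable (closure ({u} : Set Q)) := by
  rw [← zpowers_eq_closure]; exact isSolvable_of_comm (isMulCommutative_iff.mp inferInstance)

lemma key_solvable {G : Type*} [Group G] (R : Subgroup G) [R.Normal] (hRs : IsSolvable R)
    (u v : G) (h : u ∈ R ∨ v ∈ R) : IsSolvable (closure ({u, v} : Set G)) := by
  set H := closure ({u, v} : Set G) with hH
  let g : H →* G ⧸ R := (QuotientGroup.mk' R).comp H.subtype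
  have hker : g.ker = R.subgroupOf H := by
    ext x
    simp [g, MonoidHom.mem_ker, QuotientGroup.eq_one_iff, Subgroup.mem_subgroupOf]
  have hrange : g.range = Subgroup.map (QuotientGroup.mk' R) H := by
    rw [MonoidHom.range_comp, Subgroup.range_subtype]
  have hmap : Subgroup.map (QuotientGroup.mk' R) H =
      closure ((QuotientGroup.mk' R) '' ({u, v} : Set G)) := by
    rw [hH, MonoidHom.map_closure]
  haveI hrs : Group.IsSolvable g.range := by
    rcases h with h | h
    · have hle : g.range ≤ zpowers ((QuotientGroup.mk' R) v) := by
        rw [hrange, hmap, closure_le, Set.image_pair]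
        intro x hx
        rcases hx with hx | hx
        · subst hx
          have : (QuotientGroup.mk' R) u = 1 := (QuotientGroup.eq_one_iff u).2 h
          rw [this]; exact one_mem _
        · subst hx; exact mem_zpowers _
      exact @solvable_of_le' _ _ _ _ hle (isSolvable_of_comm (isMulCommutative_iff.mp inferInstance))
    · have hle : g.range ≤ zpowers ((QuotientGroup.mk' R) u) := by
        rw [hrange, hmap, closure_le, Set.image_pair]
        intro x hx
        rcases hx with hx | hx
        · subst hx; exact mem_zpowers _
        · subst hx
          have : (QuotientGroup.mk' R) v = 1 := (QuotientGroup.eq_one_iff v).2 h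
          rw [this]; exact one_mem _
      exact @solvable_of_le' _ _ _ _ hle (isSolvable_of_comm (isMulCommutative_iff.mp inferInstance))
  haveI : Group.IsSolvable (R.subgroupOf H) := by
    haveI : Group.IsSolvable R := hRs
    let ψ : (R.subgroupOf H) →* R :=
      { toFun := fun x => ⟨x.1.1, x.2⟩
        map_one' := rfl
        map_mul' := fun _ _ => rfl }
    have hinj : Function.Injective ψ := by
      intro a b hab
      have h0 : ((ψ a : R) : G) = ((ψ b : R) : G) := Subtype.ext_iff.mp hab
      exact Subtype.ext (Subtype.ext h0)
    exact solvable_of_solvable_injective hinj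
  exact solvable_of_ker_le_range (R.subgroupOf H).subtype g.rangeRestrict
    (by rw [MonoidHom.ker_rangeRestrict, hker, Subgroup.range_subtype])


lemma count_pairs {G : Type*} [Fintype G] (P : G → G → Prop) [∀ u v, Decidable (P u v)] :
    Set.ncard {p : G × G | P p.1 p.2} =
      ∑ u : G, (Finset.univ.filter (fun v => P u v)).card := by
  classical
  have hset : {p : G × G | P p.1 p.2} =
      ↑(Finset.univ.filter (fun p : G × G => P p.1 p.2)) := by
    ext p; simp
  rw [hset, Set.ncard_coe_finset,
    Finset.card_eq_sum_card_fiberwise (f := Prod.fst) (t := Finset.univ)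
      (fun p _ => Finset.mem_univ _)]
  refine Finset.sum_congr rfl fun u _ => ?_
  refine Finset.card_bij (fun p _ => p.2) ?_ ?_ ?_
  · intro p hp
    simp only [Finset.mem_filter, Finset.mem_univ, true_and] at hp ⊢
    rcases hp with ⟨h1, h2⟩
    rwa [h2] at h1
  · intro p hp q hq hpq
    simp only [Finset.mem_filter] at hp hq
    exact Prod.ext (hp.2.trans hq.2.symm) hpq
  · intro v hv
    simp only [Finset.mem_filter, Finset.mem_univ, true_and] at hv
    exact ⟨(u, v), by simp [hv], rfl⟩

theorem stmt9 {G : Type*} [Group G] [Fintype G] (hG : ¬ IsSolvable G)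
    (R : Subgroup G) (hR : IsSolvableRadical R)
    (hdeg : ∀ x : G, x ∉ R →
      6 ≤ (nsNbhd R x).ncard ∧ (nsNbhd R x).ncard ≤ Fintype.card G - Nat.card R - 2) :
    2 * ((Fintype.card G : ℝ) - Nat.card R) / (Fintype.card G : ℝ) ^ 2 +
        2 * (Nat.card R : ℝ) / (Fintype.card G : ℝ) -
        (Nat.card R : ℝ) ^ 2 / (Fintype.card G : ℝ) ^ 2 ≤
      (Set.ncard {p : G × G | IsSolvable (closure ({p.1, p.2} : Set G))} : ℝ) /
        (Fintype.card G : ℝ) ^ 2 ∧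
    (Set.ncard {p : G × G | IsSolvable (closure ({p.1, p.2} : Set G))} : ℝ) /
        (Fintype.card G : ℝ) ^ 2 ≤
      1 - 6 * ((Fintype.card G : ℝ) - Nat.card R) / (Fintype.card G : ℝ) ^ 2 := by
  
  classical
  haveI := hR.2.1
  have hRs := hR.1
  set n := Fintype.card G with hn
  set r := Nat.card R with hrdef
  obtain ⟨u0, hu0⟩ : ∃ u : G, u ∉ R := by
    by_contra h
    push_neg at h
    have htop : R = ⊤ := by
      rw [eq_top_iff]; intro x _; exact h x
    rw [htop] at hRs
    haveI : Group.IsSolvable (⊤ : Subgroup G) := hRs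
    exact hG (solvable_of_surjective
      (f := (Subgroup.topEquiv : (⊤ : Subgroup G) ≃* G).toMonoidHom)
      Subgroup.topEquiv.surjective)
  have h8 : r + 8 ≤ n := by
    obtain ⟨h1, h2⟩ := hdeg u0 hu0
    omega
  have hcount := count_pairs (G := G)
    (fun u v => IsSolvable (closure ({u, v} : Set G)))
  set f : G → ℕ := fun u =>
    (Finset.univ.filter (fun v => IsSolvable (closure ({u, v} : Set G)))).card with hf
  have hcompl : ∀ u : G, f u +
      (Finset.univ.filter
        (fun v => ¬ IsSolvable (closure ({u, v} : Set G)))).card = n := by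
    intro u
    rw [hf]
    exact Finset.card_filter_add_card_filter_not _
  have hfR : ∀ u : G, u ∈ R → f u = n := by
    intro u hu
    have : (Finset.univ.filter
        (fun v => IsSolvable (closure ({u, v} : Set G)))) = Finset.univ := by
      apply Finset.filter_true_of_mem
      intro v _
      exact key_solvable R hRs u v (Or.inl hu)
    rw [hf]; simp only [this, Finset.card_univ, hn]
  have hnb : ∀ u : G, u ∉ R →
      nsNbhd R u = ↑(Finset.univ.filter
        (fun v => ¬ IsSolvable (closure ({u, v} : Set G)))) := by
    intro u hu
    ext y
    simp only [nsNbhd, Set.mem_setOf_eq, Finset.coe_filter, Finset.mem_univ, true_and]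
    constructor
    · rintro ⟨_, _, h3⟩; exact h3
    · intro h
      refine ⟨fun hy => h (key_solvable R hRs u y (Or.inr hy)), fun hy => ?_, h⟩
      subst hy
      exact h (by
        rw [Set.pair_eq_singleton]
        exact solvable_singleton y)
  have hfNR : ∀ u : G, u ∉ R → r + 2 ≤ f u ∧ f u ≤ n - 6 := by
    intro u hu
    obtain ⟨h1, h2⟩ := hdeg u hu
    rw [hnb u hu, Set.ncard_coe_finset] at h1 h2
    have := hcompl u
    omega
  have hcardR : (Finset.univ.filter (fun u : G => u ∈ R)).card = r := by
    rw [hrdef, Nat.card_eq_fintype_card, Fintype.card_subtype]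
  have hsplit : ∑ u : G, f u =
      (∑ u ∈ Finset.univ.filter (fun u : G => u ∈ R), f u) +
      (∑ u ∈ Finset.univ.filter (fun u : G => ¬ u ∈ R), f u) :=
    (Finset.sum_filter_add_sum_filter_not _ _ _).symm
  have hcardNR : (Finset.univ.filter (fun u : G => ¬ u ∈ R)).card = n - r := by
    have := Finset.card_filter_add_card_filter_not
      (s := (Finset.univ : Finset G)) (p := fun u : G => u ∈ R)
    rw [hcardR] at this
    simp only [Finset.card_univ] at this
    omega
  have hsum1 : (∑ u ∈ Finset.univ.filter (fun u : G => u ∈ R), f u) = r * n := by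
    rw [Finset.sum_congr rfl (fun u hu => hfR u (Finset.mem_filter.mp hu).2),
      Finset.sum_const, hcardR, smul_eq_mul]
  have hlow : r * n + (n - r) * (r + 2) ≤ ∑ u : G, f u := by
    rw [hsplit, hsum1]
    have : (n - r) * (r + 2) ≤ ∑ u ∈ Finset.univ.filter (fun u : G => ¬ u ∈ R), f u := by
      rw [← hcardNR]
      have := Finset.card_nsmul_le_sum (Finset.univ.filter (fun u : G => ¬ u ∈ R)) f (r + 2)
        (fun u hu => (hfNR u (Finset.mem_filter.mp hu).2).1)
      simpa using this
    omega
  have hhigh : ∑ u : G, f u ≤ r * n + (n - r) * (n - 6) := by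
    rw [hsplit, hsum1]
    have : ∑ u ∈ Finset.univ.filter (fun u : G => ¬ u ∈ R), f u ≤ (n - r) * (n - 6) := by
      rw [← hcardNR]
      have := Finset.sum_le_card_nsmul (Finset.univ.filter (fun u : G => ¬ u ∈ R)) f (n - 6)
        (fun u hu => (hfNR u (Finset.mem_filter.mp hu).2).2)
      simpa using this
    omega
  rw [hcount]
  set S := ∑ u : G, f u with hS
  have hrn : r ≤ n := by omega
  have h6n : 6 ≤ n := by omega
  have hlowR : (r : ℝ) * n + ((n : ℝ) - r) * (r + 2) ≤ (S : ℝ) := by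
    have h' : ((r * n + (n - r) * (r + 2) : ℕ) : ℝ) ≤ (S : ℝ) := Nat.cast_le.mpr hlow
    push_cast [Nat.cast_sub hrn] at h'
    linarith
  have hhighR : (S : ℝ) ≤ (r : ℝ) * n + ((n : ℝ) - r) * ((n : ℝ) - 6) := by
    have h' : (S : ℝ) ≤ ((r * n + (n - r) * (n - 6) : ℕ) : ℝ) := Nat.cast_le.mpr hhigh
    push_cast [Nat.cast_sub hrn, Nat.cast_sub h6n] at h'
    linarith
  have hn0 : (0 : ℝ) < n := by
    have : 0 < n := by omega
    exact_mod_cast this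
  have hn2 : (0 : ℝ) < (n : ℝ) ^ 2 := by positivity
  constructor
  · have hEQ : 2 * ((n : ℝ) - r) / (n : ℝ) ^ 2 + 2 * (r : ℝ) / n - (r : ℝ) ^ 2 / (n : ℝ) ^ 2
        = (2 * ((n : ℝ) - r) + 2 * r * n - (r : ℝ) ^ 2) / (n : ℝ) ^ 2 := by
      field_simp
    rw [hEQ, div_le_div_iff₀ hn2 hn2]
    nlinarith [hlowR, hn2]
  · have hEQ : 1 - 6 * ((n : ℝ) - r) / (n : ℝ) ^ 2
        = ((n : ℝ) ^ 2 - 6 * ((n : ℝ) - r)) / (n : ℝ) ^ 2 := by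
      field_simp
    rw [hEQ, div_le_div_iff₀ hn2 hn2]
    nlinarith [hhighR, hn2]
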